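/- With the seven-dimensional vectors of Table S1: ∑_{i=1}^{4} (ψ · v_i)² = 1, ∑_{i=5}^{8} (ψ · v_i)² = 1, ∑_{i=9}^{12} (ψ · v_i)² = 1, and ∑_{i=13}^{16} (ψ · v_i)² = 1; consequently ∑_{i=1}^{16} (ψ · v_i)² = 4. (This is the quantum realization in dimension 7 of the Hardy-type paradox with success probability 1, attaining the quantum maximum μ₃ = 4 of the noncontextuality inequality whose noncontextual bound is 3.) -/
import Mathlib


noncomputable section

/-- a = 1/2 -/
def ra : ℝ := 1 / 2

/-- b = 1/√2 -/
def rb : ℝ := 1 / Real.sqrt 2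

/-- c = 1/(2√2) -/
def rc : ℝ := 1 / (2 * Real.sqrt 2)

/-- The sixteen seven-dimensional rays v₁,…,v₁₆ of Table S1
(indexed by `Fin 16`, so `ray7 k` is v_{k+1}). -/
def ray7 : Fin 16 → Fin 7 → ℝ :=
  ![![1, 0, 0, 0, 0, 0, 0],
    ![0, 1, 0, 0, 0, 0, 0],
    ![0, 0, 1, 0, 0, 0, 0],
    ![0, 0, 0, 1, 0, 0, 0],
    ![0, 0, ra, ra, 0, rb, 0],
    ![0, 0, ra, ra, 0, -rb, 0],
    ![ra, ra, 0, 0, rb, 0, 0],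
    ![ra, ra, 0, 0, -rb, 0, 0],
    ![ra, 0, ra, 0, rc, -rc, ra],
    ![0, ra, 0, ra, -rc, rc, ra],
    ![ra, 0, ra, 0, -rc, rc, -ra],
    ![0, ra, 0, ra, rc, -rc, -ra],
    ![ra, 0, 0, ra, rc, rc, -ra],
    ![0, ra, ra, 0, -rc, -rc, -ra],
    ![0, ra, ra, 0, rc, rc, ra],
    ![ra, 0, 0, ra, -rc, -rc, ra]]

/-- The initial state ψ = (1/2)(1,1,1,1,0,0,0) of Table S1. -/
def psi7 : Fin 7 → ℝ := ![ra, ra, ra, ra, 0, 0, 0]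

/-- Euclidean inner product on ℝ⁷. -/
def dot7 (u w : Fin 7 → ℝ) : ℝ := ∑ k, u k * w k

lemma v7_0 (x0 x1 x2 x3 x4 x5 x6 : ℝ) : (![x0,x1,x2,x3,x4,x5,x6]) (0 : Fin 7) = x0 := rfl
lemma v7_1 (x0 x1 x2 x3 x4 x5 x6 : ℝ) : (![x0,x1,x2,x3,x4,x5,x6]) (1 : Fin 7) = x1 := rfl
lemma v7_2 (x0 x1 x2 x3 x4 x5 x6 : ℝ) : (![x0,x1,x2,x3,x4,x5,x6]) (2 : Fin 7) = x2 := rfl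
lemma v7_3 (x0 x1 x2 x3 x4 x5 x6 : ℝ) : (![x0,x1,x2,x3,x4,x5,x6]) (3 : Fin 7) = x3 := rfl
lemma v7_4 (x0 x1 x2 x3 x4 x5 x6 : ℝ) : (![x0,x1,x2,x3,x4,x5,x6]) (4 : Fin 7) = x4 := rfl
lemma v7_5 (x0 x1 x2 x3 x4 x5 x6 : ℝ) : (![x0,x1,x2,x3,x4,x5,x6]) (5 : Fin 7) = x5 := rfl
lemma v7_6 (x0 x1 x2 x3 x4 x5 x6 : ℝ) : (![x0,x1,x2,x3,x4,x5,x6]) (6 : Fin 7) = x6 := rfl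

/-- Quantum realization in dimension 7 of the Hardy-type paradox with success
probability 1: each of the four contexts sums to probability 1 on ψ, so the
total attains the quantum maximum μ₃ = 4 (> noncontextual bound 3). -/
theorem rays_hardy_success_probability_one :
    (dot7 psi7 (ray7 0) ^ 2 + dot7 psi7 (ray7 1) ^ 2
      + dot7 psi7 (ray7 2) ^ 2 + dot7 psi7 (ray7 3) ^ 2 = 1) ∧
    (dot7 psi7 (ray7 4) ^ 2 + dot7 psi7 (ray7 5) ^ 2
      + dot7 psi7 (ray7 6) ^ 2 + dot7 psi7 (ray7 7) ^ 2 = 1) ∧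
    (dot7 psi7 (ray7 8) ^ 2 + dot7 psi7 (ray7 9) ^ 2
      + dot7 psi7 (ray7 10) ^ 2 + dot7 psi7 (ray7 11) ^ 2 = 1) ∧
    (dot7 psi7 (ray7 12) ^ 2 + dot7 psi7 (ray7 13) ^ 2
      + dot7 psi7 (ray7 14) ^ 2 + dot7 psi7 (ray7 15) ^ 2 = 1) ∧
    (∑ i : Fin 16, dot7 psi7 (ray7 i) ^ 2 = 4) := by
  have d0 : dot7 psi7 (ray7 0) = 1/2 := by
    show dot7 psi7 ![1, 0, 0, 0, 0, 0, 0] = 1/2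
    simp only [dot7, psi7, Fin.sum_univ_seven, v7_0, v7_1, v7_2, v7_3, v7_4, v7_5, v7_6]
    norm_num [ra]
  have d1 : dot7 psi7 (ray7 1) = 1/2 := by
    show dot7 psi7 ![0, 1, 0, 0, 0, 0, 0] = 1/2
    simp only [dot7, psi7, Fin.sum_univ_seven, v7_0, v7_1, v7_2, v7_3, v7_4, v7_5, v7_6]
    norm_num [ra]
  have d2 : dot7 psi7 (ray7 2) = 1/2 := by
    show dot7 psi7 ![0, 0, 1, 0, 0, 0, 0] = 1/2
    simp only [dot7, psi7, Fin.sum_univ_seven, v7_0, v7_1, v7_2, v7_3, v7_4, v7_5, v7_6]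
    norm_num [ra]
  have d3 : dot7 psi7 (ray7 3) = 1/2 := by
    show dot7 psi7 ![0, 0, 0, 1, 0, 0, 0] = 1/2
    simp only [dot7, psi7, Fin.sum_univ_seven, v7_0, v7_1, v7_2, v7_3, v7_4, v7_5, v7_6]
    norm_num [ra]
  have d4 : dot7 psi7 (ray7 4) = 1/2 := by
    show dot7 psi7 ![0, 0, ra, ra, 0, rb, 0] = 1/2
    simp only [dot7, psi7, Fin.sum_univ_seven, v7_0, v7_1, v7_2, v7_3, v7_4, v7_5, v7_6]
    norm_num [ra]
  have d5 : dot7 psi7 (ray7 5) = 1/2 := by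
    show dot7 psi7 ![0, 0, ra, ra, 0, -rb, 0] = 1/2
    simp only [dot7, psi7, Fin.sum_univ_seven, v7_0, v7_1, v7_2, v7_3, v7_4, v7_5, v7_6]
    norm_num [ra]
  have d6 : dot7 psi7 (ray7 6) = 1/2 := by
    show dot7 psi7 ![ra, ra, 0, 0, rb, 0, 0] = 1/2
    simp only [dot7, psi7, Fin.sum_univ_seven, v7_0, v7_1, v7_2, v7_3, v7_4, v7_5, v7_6]
    norm_num [ra]
  have d7 : dot7 psi7 (ray7 7) = 1/2 := by
    show dot7 psi7 ![ra, ra, 0, 0, -rb, 0, 0] = 1/2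
    simp only [dot7, psi7, Fin.sum_univ_seven, v7_0, v7_1, v7_2, v7_3, v7_4, v7_5, v7_6]
    norm_num [ra]
  have d8 : dot7 psi7 (ray7 8) = 1/2 := by
    show dot7 psi7 ![ra, 0, ra, 0, rc, -rc, ra] = 1/2
    simp only [dot7, psi7, Fin.sum_univ_seven, v7_0, v7_1, v7_2, v7_3, v7_4, v7_5, v7_6]
    norm_num [ra]
  have d9 : dot7 psi7 (ray7 9) = 1/2 := by
    show dot7 psi7 ![0, ra, 0, ra, -rc, rc, ra] = 1/2
    simp only [dot7, psi7, Fin.sum_univ_seven, v7_0, v7_1, v7_2, v7_3, v7_4, v7_5, v7_6]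
    norm_num [ra]
  have d10 : dot7 psi7 (ray7 10) = 1/2 := by
    show dot7 psi7 ![ra, 0, ra, 0, -rc, rc, -ra] = 1/2
    simp only [dot7, psi7, Fin.sum_univ_seven, v7_0, v7_1, v7_2, v7_3, v7_4, v7_5, v7_6]
    norm_num [ra]
  have d11 : dot7 psi7 (ray7 11) = 1/2 := by
    show dot7 psi7 ![0, ra, 0, ra, rc, -rc, -ra] = 1/2
    simp only [dot7, psi7, Fin.sum_univ_seven, v7_0, v7_1, v7_2, v7_3, v7_4, v7_5, v7_6]
    norm_num [ra]
  have d12 : dot7 psi7 (ray7 12) = 1/2 := by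
    show dot7 psi7 ![ra, 0, 0, ra, rc, rc, -ra] = 1/2
    simp only [dot7, psi7, Fin.sum_univ_seven, v7_0, v7_1, v7_2, v7_3, v7_4, v7_5, v7_6]
    norm_num [ra]
  have d13 : dot7 psi7 (ray7 13) = 1/2 := by
    show dot7 psi7 ![0, ra, ra, 0, -rc, -rc, -ra] = 1/2
    simp only [dot7, psi7, Fin.sum_univ_seven, v7_0, v7_1, v7_2, v7_3, v7_4, v7_5, v7_6]
    norm_num [ra]
  have d14 : dot7 psi7 (ray7 14) = 1/2 := by
    show dot7 psi7 ![0, ra, ra, 0, rc, rc, ra] = 1/2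
    simp only [dot7, psi7, Fin.sum_univ_seven, v7_0, v7_1, v7_2, v7_3, v7_4, v7_5, v7_6]
    norm_num [ra]
  have d15 : dot7 psi7 (ray7 15) = 1/2 := by
    show dot7 psi7 ![ra, 0, 0, ra, -rc, -rc, ra] = 1/2
    simp only [dot7, psi7, Fin.sum_univ_seven, v7_0, v7_1, v7_2, v7_3, v7_4, v7_5, v7_6]
    norm_num [ra]
  refine ⟨?_, ?_, ?_, ?_, ?_⟩
  · rw [d0, d1, d2, d3]; norm_num
  · rw [d4, d5, d6, d7]; norm_num
  · rw [d8, d9, d10, d11]; norm_num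
  · rw [d12, d13, d14, d15]; norm_num
  · have h : ∀ i : Fin 16, dot7 psi7 (ray7 i) ^ 2 = 1/4 := by
      intro i
      fin_cases i
      · show dot7 psi7 (ray7 0) ^ 2 = 1/4
        rw [d0]; norm_num
      · show dot7 psi7 (ray7 1) ^ 2 = 1/4
        rw [d1]; norm_num
      · show dot7 psi7 (ray7 2) ^ 2 = 1/4
        rw [d2]; norm_num
      · show dot7 psi7 (ray7 3) ^ 2 = 1/4
        rw [d3]; norm_num
      · show dot7 psi7 (ray7 4) ^ 2 = 1/4
        rw [d4]; norm_num
      · show dot7 psi7 (ray7 5) ^ 2 = 1/4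
        rw [d5]; norm_num
      · show dot7 psi7 (ray7 6) ^ 2 = 1/4
        rw [d6]; norm_num
      · show dot7 psi7 (ray7 7) ^ 2 = 1/4
        rw [d7]; norm_num
      · show dot7 psi7 (ray7 8) ^ 2 = 1/4
        rw [d8]; norm_num
      · show dot7 psi7 (ray7 9) ^ 2 = 1/4
        rw [d9]; norm_num
      · show dot7 psi7 (ray7 10) ^ 2 = 1/4
        rw [d10]; norm_num
      · show dot7 psi7 (ray7 11) ^ 2 = 1/4
        rw [d11]; norm_num
      · show dot7 psi7 (ray7 12) ^ 2 = 1/4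
        rw [d12]; norm_num
      · show dot7 psi7 (ray7 13) ^ 2 = 1/4
        rw [d13]; norm_num
      · show dot7 psi7 (ray7 14) ^ 2 = 1/4
        rw [d14]; norm_num
      · show dot7 psi7 (ray7 15) ^ 2 = 1/4
        rw [d15]; norm_num
    rw [Finset.sum_congr rfl fun i _ => h i]
    simp only [Finset.sum_const, Finset.card_univ, Fintype.card_fin, nsmul_eq_mul]
    norm_num
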